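/- L² stability of perturbed solutions: suppose z₁(u,v) = N(u,v)·u and z₂(u,v) = N(u,v)·v are globally Lipschitz on ℝ² with Lipschitz constant L (with respect to the Euclidean norm). Let (w₁, w₂) and (ŵ₁, ŵ₂) be two classical solutions of system (W) on ℝ × [0,T] whose differences eᵢ = wᵢ − ŵᵢ satisfy: for each t, x ↦ eᵢ(x,t)² is integrable, eᵢ(x,t) → 0 as |x| → ∞, and on each compact time interval |eᵢ·∂ₜeᵢ| is dominated by an integrable function of x. Then there exists a constant C depending only on L such that ∫_ℝ (e₁²(x,t) + e₂²(x,t)) dx ≤ e^{Ct} · ∫_ℝ (e₁²(x,0) + e₂²(x,0)) dx for all t ∈ [0,T]. -/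

import Mathlib

open Real Set Filter MeasureTheory

section Aux
variable {T : ℝ} {w : ℝ → ℝ → ℝ}

lemma aux_diffAt (hw : ContDiffOn ℝ 1 (fun p : ℝ × ℝ => w p.1 p.2) (Set.univ ×ˢ Set.Icc 0 T))
    {t : ℝ} (ht : t ∈ Set.Ioo 0 T) (x : ℝ) :
    DifferentiableAt ℝ (fun p : ℝ × ℝ => w p.1 p.2) (x, t) := by
  have hU : IsOpen ((Set.univ : Set ℝ) ×ˢ Set.Ioo (0:ℝ) T) := isOpen_univ.prod isOpen_Ioo
  have hsub : ((Set.univ : Set ℝ) ×ˢ Set.Ioo (0:ℝ) T) ⊆ Set.univ ×ˢ Set.Icc 0 T :=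
    Set.prod_mono_right Set.Ioo_subset_Icc_self
  exact ((hw.differentiableOn one_ne_zero).mono hsub).differentiableAt
    (hU.mem_nhds ⟨Set.mem_univ x, ht⟩)

lemma aux_hasDerivAt_t (hw : ContDiffOn ℝ 1 (fun p : ℝ × ℝ => w p.1 p.2) (Set.univ ×ˢ Set.Icc 0 T))
    {t : ℝ} (ht : t ∈ Set.Ioo 0 T) (x : ℝ) :
    HasDerivAt (fun s => w x s) (deriv (fun s => w x s) t) t := by
  have h := (aux_diffAt hw ht x).comp t ((differentiableAt_const x).prodMk differentiableAt_id)
  exact h.hasDerivAt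

lemma aux_hasDerivAt_x (hw : ContDiffOn ℝ 1 (fun p : ℝ × ℝ => w p.1 p.2) (Set.univ ×ˢ Set.Icc 0 T))
    {t : ℝ} (ht : t ∈ Set.Ioo 0 T) (x : ℝ) :
    HasDerivAt (fun y => w y t) (deriv (fun y => w y t) x) x := by
  have h := (aux_diffAt hw ht x).comp x ((differentiableAt_id (𝕜 := ℝ) (x := x)).prodMk (differentiableAt_const t))
  exact h.hasDerivAt

lemma aux_timeDeriv_eq (hw : ContDiffOn ℝ 1 (fun p : ℝ × ℝ => w p.1 p.2) (Set.univ ×ˢ Set.Icc 0 T))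
    {t : ℝ} (ht : t ∈ Set.Ioo 0 T) (x : ℝ) :
    deriv (fun s => w x s) t = fderiv ℝ (fun p : ℝ × ℝ => w p.1 p.2) (x, t) (0, 1) := by
  have hγ : HasDerivAt (fun s : ℝ => ((x, s) : ℝ × ℝ)) (0, 1) t :=
    (hasDerivAt_const t x).prodMk (hasDerivAt_id t)
  have h := ((aux_diffAt hw ht x).hasFDerivAt).comp_hasDerivAt t hγ
  exact h.deriv

lemma aux_timeDeriv_cont (hw : ContDiffOn ℝ 1 (fun p : ℝ × ℝ => w p.1 p.2) (Set.univ ×ˢ Set.Icc 0 T))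
    {t : ℝ} (ht : t ∈ Set.Ioo 0 T) :
    Continuous (fun x => deriv (fun s => w x s) t) := by
  have hU : IsOpen ((Set.univ : Set ℝ) ×ˢ Set.Ioo (0:ℝ) T) := isOpen_univ.prod isOpen_Ioo
  have hsub : ((Set.univ : Set ℝ) ×ˢ Set.Ioo (0:ℝ) T) ⊆ Set.univ ×ˢ Set.Icc 0 T :=
    Set.prod_mono_right Set.Ioo_subset_Icc_self
  have hfd : ContinuousOn (fderiv ℝ (fun p : ℝ × ℝ => w p.1 p.2))
      ((Set.univ : Set ℝ) ×ˢ Set.Ioo (0:ℝ) T) :=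
    (hw.mono hsub).continuousOn_fderiv_of_isOpen hU le_rfl
  have hcomp : Continuous (fun x : ℝ => fderiv ℝ (fun p : ℝ × ℝ => w p.1 p.2) (x, t)) := by
    have := hfd.comp_continuous (continuous_id.prodMk continuous_const)
      (fun x => ⟨Set.mem_univ x, ht⟩)
    exact this
  have : Continuous (fun x : ℝ => fderiv ℝ (fun p : ℝ × ℝ => w p.1 p.2) (x, t) (0, 1)) :=
    ((ContinuousLinearMap.apply ℝ ℝ ((0, 1) : ℝ × ℝ)).continuous).comp hcomp
  refine this.congr fun x => ?_
  exact (aux_timeDeriv_eq hw ht x).symm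

lemma aux_cont_x (hw : ContDiffOn ℝ 1 (fun p : ℝ × ℝ => w p.1 p.2) (Set.univ ×ˢ Set.Icc 0 T))
    {t : ℝ} (ht : t ∈ Set.Icc 0 T) : Continuous fun x => w x t :=
  hw.continuousOn.comp_continuous (continuous_id.prodMk continuous_const)
    (fun x => ⟨Set.mem_univ x, ht⟩)

lemma aux_cont_t (hw : ContDiffOn ℝ 1 (fun p : ℝ × ℝ => w p.1 p.2) (Set.univ ×ˢ Set.Icc 0 T))
    (x : ℝ) : ContinuousOn (fun s => w x s) (Set.Icc 0 T) := by
  exact hw.continuousOn.comp (continuous_const.prodMk continuous_id).continuousOn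
    (fun s hs => ⟨Set.mem_univ x, hs⟩)
end Aux

/-- The nonlinear coefficient `N(u,v) = N₀(√(u² + v²))`. -/
noncomputable def Ncoef (N₀ : ℝ → ℝ) (u v : ℝ) : ℝ :=
  N₀ (Real.sqrt (u ^ 2 + v ^ 2))

/-- `(w₁, w₂)` is a classical solution of system (W),
`∂ₜw₁ = ∂ₓw₁ − N(w₁,w₂)·w₂`, `∂ₜw₂ = −∂ₓw₂ + N(w₁,w₂)·w₁`, on `ℝ × [0, T]`:
a pair of `C¹` functions satisfying the equations pointwise. -/
def IsSolW (N₀ : ℝ → ℝ) (T : ℝ) (w₁ w₂ : ℝ → ℝ → ℝ) : Prop :=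
  ContDiffOn ℝ 1 (fun p : ℝ × ℝ => w₁ p.1 p.2) (Set.univ ×ˢ Set.Icc 0 T) ∧
  ContDiffOn ℝ 1 (fun p : ℝ × ℝ => w₂ p.1 p.2) (Set.univ ×ˢ Set.Icc 0 T) ∧
  ∀ x : ℝ, ∀ t ∈ Set.Icc (0 : ℝ) T,
    deriv (fun s => w₁ x s) t
        = deriv (fun y => w₁ y t) x - Ncoef N₀ (w₁ x t) (w₂ x t) * w₂ x t ∧
    deriv (fun s => w₂ x s) t
        = - deriv (fun y => w₂ y t) x + Ncoef N₀ (w₁ x t) (w₂ x t) * w₁ x t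

set_option maxHeartbeats 4000000 in
/-- L² stability: if `z₁(u,v) = N(u,v)·u` and `z₂(u,v) = N(u,v)·v`
are globally Lipschitz with constant `L` (Euclidean norm), then there is a
constant `C` depending only on `L` such that for any two classical solutions of
system (W) whose difference `(e₁, e₂)` is square-integrable, decays at `±∞`, and
whose `|eᵢ·∂ₜeᵢ|` is dominated on compact time intervals by an integrable
function of `x`, one has
`∫ (e₁² + e₂²)(·,t) ≤ e^{Ct} · ∫ (e₁² + e₂²)(·,0)` for `t ∈ [0,T]`. -/
theorem stmt11 (L : ℝ) (hL : 0 ≤ L) :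
    ∃ C : ℝ, ∀ N₀ : ℝ → ℝ,
      (∀ p q : ℝ × ℝ,
        |Ncoef N₀ p.1 p.2 * p.1 - Ncoef N₀ q.1 q.2 * q.1|
          ≤ L * Real.sqrt ((p.1 - q.1) ^ 2 + (p.2 - q.2) ^ 2)) →
      (∀ p q : ℝ × ℝ,
        |Ncoef N₀ p.1 p.2 * p.2 - Ncoef N₀ q.1 q.2 * q.2|
          ≤ L * Real.sqrt ((p.1 - q.1) ^ 2 + (p.2 - q.2) ^ 2)) →
      ∀ (T : ℝ) (w₁ w₂ v₁ v₂ : ℝ → ℝ → ℝ),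
        IsSolW N₀ T w₁ w₂ → IsSolW N₀ T v₁ v₂ →
        (∀ t ∈ Set.Icc (0 : ℝ) T,
          Integrable (fun x => (w₁ x t - v₁ x t) ^ 2) ∧
          Integrable (fun x => (w₂ x t - v₂ x t) ^ 2)) →
        (∀ t ∈ Set.Icc (0 : ℝ) T,
          Tendsto (fun x => w₁ x t - v₁ x t) atTop (nhds 0) ∧
          Tendsto (fun x => w₁ x t - v₁ x t) atBot (nhds 0) ∧
          Tendsto (fun x => w₂ x t - v₂ x t) atTop (nhds 0) ∧
          Tendsto (fun x => w₂ x t - v₂ x t) atBot (nhds 0)) →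
        (∀ t₀ t₁ : ℝ, 0 ≤ t₀ → t₀ ≤ t₁ → t₁ ≤ T →
          ∃ g : ℝ → ℝ, Integrable g ∧
            ∀ x : ℝ, ∀ t ∈ Set.Icc t₀ t₁,
              |(w₁ x t - v₁ x t) * deriv (fun s => w₁ x s - v₁ x s) t|
                + |(w₂ x t - v₂ x t) * deriv (fun s => w₂ x s - v₂ x s) t| ≤ g x) →
        ∀ t ∈ Set.Icc (0 : ℝ) T,
          (∫ x : ℝ, ((w₁ x t - v₁ x t) ^ 2 + (w₂ x t - v₂ x t) ^ 2))
            ≤ Real.exp (C * t) *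
                ∫ x : ℝ, ((w₁ x 0 - v₁ x 0) ^ 2 + (w₂ x 0 - v₂ x 0) ^ 2) := by
  refine ⟨4 * L, ?_⟩
  intro N₀ hz₁ hz₂ T w₁ w₂ v₁ v₂ hw hv hInt hdec hdom t ht
  obtain ⟨ht0, htT⟩ := ht
  have hT : (0:ℝ) ≤ T := le_trans ht0 htT
  obtain ⟨hw1, hw2, hweq⟩ := hw
  obtain ⟨hv1, hv2, hveq⟩ := hv
  obtain ⟨g, hgint, hg⟩ := hdom 0 T le_rfl hT le_rfl
  set F : ℝ → ℝ → ℝ := fun s x => (w₁ x s - v₁ x s) ^ 2 + (w₂ x s - v₂ x s) ^ 2 with hF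
  set F' : ℝ → ℝ → ℝ := fun s x =>
    2 * (w₁ x s - v₁ x s) * deriv (fun s' => w₁ x s' - v₁ x s') s
      + 2 * (w₂ x s - v₂ x s) * deriv (fun s' => w₂ x s' - v₂ x s') s with hF'
  set E : ℝ → ℝ := fun s => ∫ x, F s x with hE
  show E t ≤ Real.exp (4 * L * t) * E 0
  have hgnn : ∀ x, 0 ≤ g x := fun x => le_trans (by positivity) (hg x 0 ⟨le_rfl, hT⟩)
  have hFnn : ∀ s x, 0 ≤ F s x := fun s x => by simp only [hF]; positivity
  have hFint : ∀ s ∈ Set.Icc (0:ℝ) T, Integrable (F s) :=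
    fun s hs => ((hInt s hs).1.add (hInt s hs).2)
  have hFcont_t : ∀ x, ContinuousOn (fun s => F s x) (Set.Icc 0 T) := by
    intro x
    exact ((((aux_cont_t hw1 x).sub (aux_cont_t hv1 x)).pow 2).add
      (((aux_cont_t hw2 x).sub (aux_cont_t hv2 x)).pow 2))
  have hde1 : ∀ {s : ℝ}, s ∈ Set.Ioo (0:ℝ) T → ∀ x, HasDerivAt (fun s' => w₁ x s' - v₁ x s')
      (deriv (fun s' => w₁ x s' - v₁ x s') s) s := by
    intro s hs x
    have h : HasDerivAt (fun s' => w₁ x s' - v₁ x s')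
        (deriv (fun s => w₁ x s) s - deriv (fun s => v₁ x s) s) s :=
      (aux_hasDerivAt_t hw1 hs x).sub (aux_hasDerivAt_t hv1 hs x)
    rw [h.deriv]; exact h
  have hde2 : ∀ {s : ℝ}, s ∈ Set.Ioo (0:ℝ) T → ∀ x, HasDerivAt (fun s' => w₂ x s' - v₂ x s')
      (deriv (fun s' => w₂ x s' - v₂ x s') s) s := by
    intro s hs x
    have h : HasDerivAt (fun s' => w₂ x s' - v₂ x s')
        (deriv (fun s => w₂ x s) s - deriv (fun s => v₂ x s) s) s :=
      (aux_hasDerivAt_t hw2 hs x).sub (aux_hasDerivAt_t hv2 hs x)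
    rw [h.deriv]; exact h
  have hdF : ∀ {s : ℝ}, s ∈ Set.Ioo (0:ℝ) T → ∀ x,
      HasDerivAt (fun s' => F s' x) (F' s x) s := by
    intro s hs x
    have h := ((hde1 hs x).pow 2).add ((hde2 hs x).pow 2)
    refine h.congr_deriv ?_
    simp only [hF']
    ring
  have habs : ∀ u ∈ Set.Icc (0:ℝ) T, ∀ x, |F' u x| ≤ 2 * g x := by
    intro u hu x
    have h := hg x u hu
    calc |F' u x| ≤ |2 * (w₁ x u - v₁ x u) * deriv (fun s' => w₁ x s' - v₁ x s') u|
          + |2 * (w₂ x u - v₂ x u) * deriv (fun s' => w₂ x s' - v₂ x s') u| := abs_add_le _ _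
      _ = 2 * |(w₁ x u - v₁ x u) * deriv (fun s' => w₁ x s' - v₁ x s') u|
          + 2 * |(w₂ x u - v₂ x u) * deriv (fun s' => w₂ x s' - v₂ x s') u| := by
            rw [mul_assoc, mul_assoc, abs_mul (2:ℝ), abs_mul (2:ℝ), abs_two]
      _ ≤ 2 * g x := by linarith
  have hbound : ∀ s ∈ Set.Icc (0:ℝ) T, ∀ x, F s x ≤ F 0 x + 2 * g x * T := by
    intro s hs x
    rcases eq_or_lt_of_le hs.1 with h0 | h0
    · rw [← h0]
      nlinarith [hgnn x, hT]
    · obtain ⟨c, hc, hceq⟩ := exists_hasDerivAt_eq_slope (fun s' => F s' x) (fun s' => F' s' x)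
        h0 ((hFcont_t x).mono (Set.Icc_subset_Icc le_rfl hs.2))
        (fun c hc => hdF ⟨hc.1, lt_of_lt_of_le hc.2 hs.2⟩ x)
      have hcI : c ∈ Set.Icc (0:ℝ) T := ⟨hc.1.le, le_trans hc.2.le hs.2⟩
      have h1 := habs c hcI x
      rw [sub_zero, eq_div_iff h0.ne'] at hceq
      nlinarith [le_abs_self (F' c x), neg_abs_le (F' c x), hgnn x, hs.1, hs.2]
  have hEcont : ContinuousOn E (Set.Icc 0 T) := by
    apply continuousOn_of_dominated (bound := fun x => F 0 x + 2 * g x * T)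
    · exact fun s hs => (hFint s hs).aestronglyMeasurable
    · intro s hs
      filter_upwards with x
      rw [Real.norm_eq_abs, abs_of_nonneg (hFnn s x)]
      exact hbound s hs x
    · exact (hFint 0 ⟨le_rfl, hT⟩).add ((hgint.const_mul 2).mul_const T)
    · filter_upwards with x
      exact hFcont_t x
  have hEderiv : ∀ s ∈ Set.Ioo (0:ℝ) T, Integrable (F' s) ∧ HasDerivAt E (∫ x, F' s x) s := by
    intro s hs
    have hε0 : 0 < min s (T - s) := lt_min hs.1 (sub_pos.2 hs.2)
    have hball : Metric.ball s (min s (T - s)) ⊆ Set.Ioo 0 T := by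
      intro u hu
      rw [Metric.mem_ball, Real.dist_eq] at hu
      have h1 := abs_lt.1 hu
      have h2 := min_le_left s (T - s)
      have h3 := min_le_right s (T - s)
      exact ⟨by linarith [h1.1], by linarith [h1.2]⟩
    have hsI : s ∈ Set.Icc (0:ℝ) T := Set.Ioo_subset_Icc_self hs
    have hc1 : Continuous fun x => deriv (fun s' => w₁ x s' - v₁ x s') s := by
      refine ((aux_timeDeriv_cont hw1 hs).sub (aux_timeDeriv_cont hv1 hs)).congr fun x => ?_
      exact ((aux_hasDerivAt_t hw1 hs x).sub (aux_hasDerivAt_t hv1 hs x)).deriv.symm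
    have hc2 : Continuous fun x => deriv (fun s' => w₂ x s' - v₂ x s') s := by
      refine ((aux_timeDeriv_cont hw2 hs).sub (aux_timeDeriv_cont hv2 hs)).congr fun x => ?_
      exact ((aux_hasDerivAt_t hw2 hs x).sub (aux_hasDerivAt_t hv2 hs x)).deriv.symm
    have hF'cont : Continuous (F' s) := by
      simp only [hF']
      exact ((continuous_const.mul ((aux_cont_x hw1 hsI).sub (aux_cont_x hv1 hsI))).mul hc1).add
        ((continuous_const.mul ((aux_cont_x hw2 hsI).sub (aux_cont_x hv2 hsI))).mul hc2)
    exact hasDerivAt_integral_of_dominated_loc_of_deriv_le (Metric.ball_mem_nhds s hε0)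
      (by filter_upwards [Metric.ball_mem_nhds s hε0] with u hu
          exact (hFint u (Set.Ioo_subset_Icc_self (hball hu))).aestronglyMeasurable)
      (hFint s hsI) hF'cont.aestronglyMeasurable
      (by filter_upwards with x u hu
          exact habs u (Set.Ioo_subset_Icc_self (hball hu)) x)
      (hgint.const_mul 2)
      (by filter_upwards with x u hu
          exact hdF (hball hu) x)
  have hE'bound : ∀ s ∈ Set.Ioo (0:ℝ) T, |∫ x, F' s x| ≤ 4 * L * E s := by
    intro s hs
    have hsI : s ∈ Set.Icc (0:ℝ) T := Set.Ioo_subset_Icc_self hs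
    set Δ₁ : ℝ → ℝ := fun x => Ncoef N₀ (w₁ x s) (w₂ x s) * (w₁ x s)
      - Ncoef N₀ (v₁ x s) (v₂ x s) * (v₁ x s) with hΔ₁
    set Δ₂ : ℝ → ℝ := fun x => Ncoef N₀ (w₁ x s) (w₂ x s) * (w₂ x s)
      - Ncoef N₀ (v₁ x s) (v₂ x s) * (v₂ x s) with hΔ₂
    set r : ℝ → ℝ := fun x => 2 * (w₂ x s - v₂ x s) * Δ₁ x
      - 2 * (w₁ x s - v₁ x s) * Δ₂ x with hr
    set φ : ℝ → ℝ := fun x => (w₁ x s - v₁ x s) ^ 2 - (w₂ x s - v₂ x s) ^ 2 with hφ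
    have hφd : ∀ x, HasDerivAt φ (F' s x - r x) x := by
      intro x
      have h1 : HasDerivAt (fun y => w₁ y s - v₁ y s)
          (deriv (fun y => w₁ y s) x - deriv (fun y => v₁ y s) x) x :=
        (aux_hasDerivAt_x hw1 hs x).sub (aux_hasDerivAt_x hv1 hs x)
      have h2 : HasDerivAt (fun y => w₂ y s - v₂ y s)
          (deriv (fun y => w₂ y s) x - deriv (fun y => v₂ y s) x) x :=
        (aux_hasDerivAt_x hw2 hs x).sub (aux_hasDerivAt_x hv2 hs x)
      have h := (h1.pow 2).sub (h2.pow 2)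
      refine h.congr_deriv ?_
      have e1d : deriv (fun s' => w₁ x s' - v₁ x s') s
          = deriv (fun s'' => w₁ x s'') s - deriv (fun s'' => v₁ x s'') s :=
        ((aux_hasDerivAt_t hw1 hs x).sub (aux_hasDerivAt_t hv1 hs x)).deriv
      have e2d : deriv (fun s' => w₂ x s' - v₂ x s') s
          = deriv (fun s'' => w₂ x s'') s - deriv (fun s'' => v₂ x s'') s :=
        ((aux_hasDerivAt_t hw2 hs x).sub (aux_hasDerivAt_t hv2 hs x)).deriv
      have pw := hweq x s hsI
      have pv := hveq x s hsI
      simp only [hF', hr, hΔ₁, hΔ₂, e1d, e2d, pw.1, pw.2, pv.1, pv.2]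
      ring
    have hre : ∀ x, |r x| ≤ 4 * L * F s x := by
      intro x
      have hd1 : |Δ₁ x| ≤ L * Real.sqrt ((w₁ x s - v₁ x s) ^ 2 + (w₂ x s - v₂ x s) ^ 2) := by
        simpa using hz₁ (w₁ x s, w₂ x s) (v₁ x s, v₂ x s)
      have hd2 : |Δ₂ x| ≤ L * Real.sqrt ((w₁ x s - v₁ x s) ^ 2 + (w₂ x s - v₂ x s) ^ 2) := by
        simpa using hz₂ (w₁ x s, w₂ x s) (v₁ x s, v₂ x s)
      set a := w₁ x s - v₁ x s
      set b := w₂ x s - v₂ x s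
      have hsq : Real.sqrt (a ^ 2 + b ^ 2) * Real.sqrt (a ^ 2 + b ^ 2) = a ^ 2 + b ^ 2 :=
        Real.mul_self_sqrt (by positivity)
      have ha : |a| ≤ Real.sqrt (a ^ 2 + b ^ 2) := by
        rw [← Real.sqrt_sq_eq_abs]
        exact Real.sqrt_le_sqrt (by nlinarith)
      have hb : |b| ≤ Real.sqrt (a ^ 2 + b ^ 2) := by
        rw [← Real.sqrt_sq_eq_abs]
        exact Real.sqrt_le_sqrt (by nlinarith)
      have hstep : |r x| ≤ 2 * |b| * |Δ₁ x| + 2 * |a| * |Δ₂ x| := by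
        have hrx : r x = 2 * b * Δ₁ x - 2 * a * Δ₂ x := rfl
        rw [hrx]
        have h1 : |2 * b * Δ₁ x| = 2 * |b| * |Δ₁ x| := by
          rw [abs_mul, abs_mul, abs_two]
        have h2 : |2 * a * Δ₂ x| = 2 * |a| * |Δ₂ x| := by
          rw [abs_mul, abs_mul, abs_two]
        calc |2 * b * Δ₁ x - 2 * a * Δ₂ x| ≤ |2 * b * Δ₁ x| + |2 * a * Δ₂ x| := abs_sub _ _
          _ = 2 * |b| * |Δ₁ x| + 2 * |a| * |Δ₂ x| := by rw [h1, h2]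
      have hFsx : F s x = a ^ 2 + b ^ 2 := rfl
      have c1 : 2 * |b| * |Δ₁ x| ≤ 2 * |b| * (L * Real.sqrt (a ^ 2 + b ^ 2)) :=
        mul_le_mul_of_nonneg_left hd1 (by positivity)
      have c2 : 2 * |a| * |Δ₂ x| ≤ 2 * |a| * (L * Real.sqrt (a ^ 2 + b ^ 2)) :=
        mul_le_mul_of_nonneg_left hd2 (by positivity)
      have c3 : 2 * L * (|a| + |b|) * Real.sqrt (a ^ 2 + b ^ 2)
          ≤ 2 * L * (Real.sqrt (a ^ 2 + b ^ 2) + Real.sqrt (a ^ 2 + b ^ 2))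
            * Real.sqrt (a ^ 2 + b ^ 2) :=
        mul_le_mul_of_nonneg_right
          (mul_le_mul_of_nonneg_left (add_le_add ha hb) (by positivity))
          (Real.sqrt_nonneg _)
      rw [hFsx]
      calc |r x| ≤ 2 * |b| * (L * Real.sqrt (a ^ 2 + b ^ 2))
            + 2 * |a| * (L * Real.sqrt (a ^ 2 + b ^ 2)) := by linarith
        _ = 2 * L * (|a| + |b|) * Real.sqrt (a ^ 2 + b ^ 2) := by ring
        _ ≤ 2 * L * (Real.sqrt (a ^ 2 + b ^ 2) + Real.sqrt (a ^ 2 + b ^ 2))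
            * Real.sqrt (a ^ 2 + b ^ 2) := c3
        _ = 4 * L * (Real.sqrt (a ^ 2 + b ^ 2) * Real.sqrt (a ^ 2 + b ^ 2)) := by ring
        _ = 4 * L * (a ^ 2 + b ^ 2) := by rw [hsq]
    have hz₁cont : Continuous (fun p : ℝ × ℝ => Ncoef N₀ p.1 p.2 * p.1) := by
      rw [continuous_iff_continuousAt]
      intro p₀
      rw [ContinuousAt, tendsto_iff_dist_tendsto_zero]
      have hcb : Continuous fun p : ℝ × ℝ =>
          L * Real.sqrt ((p.1 - p₀.1) ^ 2 + (p.2 - p₀.2) ^ 2) := by fun_prop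
      have hb : Tendsto (fun p : ℝ × ℝ =>
          L * Real.sqrt ((p.1 - p₀.1) ^ 2 + (p.2 - p₀.2) ^ 2)) (nhds p₀) (nhds 0) := by
        have h0 := hcb.tendsto p₀
        simpa using h0
      exact squeeze_zero (fun p => dist_nonneg)
        (fun p => by rw [Real.dist_eq]; exact hz₁ p p₀) hb
    have hz₂cont : Continuous (fun p : ℝ × ℝ => Ncoef N₀ p.1 p.2 * p.2) := by
      rw [continuous_iff_continuousAt]
      intro p₀
      rw [ContinuousAt, tendsto_iff_dist_tendsto_zero]
      have hcb : Continuous fun p : ℝ × ℝ =>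
          L * Real.sqrt ((p.1 - p₀.1) ^ 2 + (p.2 - p₀.2) ^ 2) := by fun_prop
      have hb : Tendsto (fun p : ℝ × ℝ =>
          L * Real.sqrt ((p.1 - p₀.1) ^ 2 + (p.2 - p₀.2) ^ 2)) (nhds p₀) (nhds 0) := by
        have h0 := hcb.tendsto p₀
        simpa using h0
      exact squeeze_zero (fun p => dist_nonneg)
        (fun p => by rw [Real.dist_eq]; exact hz₂ p p₀) hb
    have hrcont : Continuous r := by
      have hwp : Continuous fun x : ℝ => (w₁ x s, w₂ x s) :=
        (aux_cont_x hw1 hsI).prodMk (aux_cont_x hw2 hsI)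
      have hvp : Continuous fun x : ℝ => (v₁ x s, v₂ x s) :=
        (aux_cont_x hv1 hsI).prodMk (aux_cont_x hv2 hsI)
      have hA : Continuous fun x => Ncoef N₀ (w₁ x s) (w₂ x s) * (w₁ x s) := by
        have h := hz₁cont.comp hwp; exact h
      have hA' : Continuous fun x => Ncoef N₀ (v₁ x s) (v₂ x s) * (v₁ x s) := by
        have h := hz₁cont.comp hvp; exact h
      have hB : Continuous fun x => Ncoef N₀ (w₁ x s) (w₂ x s) * (w₂ x s) := by
        have h := hz₂cont.comp hwp; exact h
      have hB' : Continuous fun x => Ncoef N₀ (v₁ x s) (v₂ x s) * (v₂ x s) := by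
        have h := hz₂cont.comp hvp; exact h
      simp only [hr, hΔ₁, hΔ₂]
      exact ((continuous_const.mul ((aux_cont_x hw2 hsI).sub (aux_cont_x hv2 hsI))).mul
        (hA.sub hA')).sub
        ((continuous_const.mul ((aux_cont_x hw1 hsI).sub (aux_cont_x hv1 hsI))).mul
          (hB.sub hB'))
    have hrint : Integrable r := by
      refine ((hFint s hsI).const_mul (4 * L)).mono hrcont.aestronglyMeasurable ?_
      filter_upwards with x
      rw [Real.norm_eq_abs, Real.norm_eq_abs, abs_of_nonneg (by positivity : (0:ℝ) ≤ 4 * L * F s x)]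
      exact hre x
    have hφ'int : Integrable (fun x => F' s x - r x) := (hEderiv s hs).1.sub hrint
    obtain ⟨h1t, h1b, h2t, h2b⟩ := hdec s hsI
    have hφtop : Tendsto φ atTop (nhds 0) := by
      have hx1 := ((continuous_pow 2).tendsto (0:ℝ)).comp h1t
      have hx2 := ((continuous_pow 2).tendsto (0:ℝ)).comp h2t
      have := hx1.sub hx2
      simpa using this
    have hφbot : Tendsto φ atBot (nhds 0) := by
      have hx1 := ((continuous_pow 2).tendsto (0:ℝ)).comp h1b
      have hx2 := ((continuous_pow 2).tendsto (0:ℝ)).comp h2b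
      have := hx1.sub hx2
      simpa using this
    have hIoi : ∫ x in Set.Ioi (0:ℝ), (F' s x - r x) = 0 - φ 0 :=
      integral_Ioi_of_hasDerivAt_of_tendsto' (fun x _ => hφd x) hφ'int.integrableOn hφtop
    have hIic : ∫ x in Set.Iic (0:ℝ), (F' s x - r x) = φ 0 - 0 :=
      integral_Iic_of_hasDerivAt_of_tendsto' (fun x _ => hφd x) hφ'int.integrableOn hφbot
    have hφ'zero : ∫ x, (F' s x - r x) = 0 := by
      rw [← intervalIntegral.integral_Iic_add_Ioi hφ'int.integrableOn hφ'int.integrableOn, hIoi, hIic]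
      ring
    have hsplit : ∫ x, F' s x = ∫ x, r x := by
      have hfe : (fun x => F' s x) = fun x => (F' s x - r x) + r x := by
        funext x; ring
      rw [hfe, integral_add hφ'int hrint, hφ'zero, zero_add]
    rw [hsplit]
    calc |∫ x, r x| ≤ ∫ x, |r x| := by
          simpa [Real.norm_eq_abs] using norm_integral_le_integral_norm r
      _ ≤ ∫ x, 4 * L * F s x :=
          integral_mono hrint.abs ((hFint s hsI).const_mul _) (fun x => hre x)
      _ = 4 * L * E s := by rw [hE]; exact integral_const_mul _ _
  have hEnn : ∀ u, 0 ≤ E u := fun u => integral_nonneg (fun x => hFnn u x)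
  rcases eq_or_lt_of_le ht0 with h0 | h0
  · rw [← h0, mul_zero, Real.exp_zero, one_mul]
  · have key : ∀ a ∈ Set.Ioo (0:ℝ) t, E t ≤ E a * Real.exp (4 * L * t) := by
      intro a ha
      have hat : a ≤ t := ha.2.le
      have h := norm_le_gronwallBound_of_norm_deriv_right_le
        (f := E) (f' := fun u => ∫ x, F' u x) (δ := E a) (K := 4 * L) (ε := 0) (a := a) (b := t)
        (hEcont.mono (Set.Icc_subset_Icc ha.1.le htT))
        (fun u hu => ((hEderiv u ⟨lt_of_lt_of_le ha.1 hu.1, lt_of_lt_of_le hu.2 htT⟩).2).hasDerivWithinAt)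
        (by rw [Real.norm_eq_abs, abs_of_nonneg (hEnn a)])
        (fun u hu => by
          rw [Real.norm_eq_abs, Real.norm_eq_abs, abs_of_nonneg (hEnn u), add_zero]
          exact hE'bound u ⟨lt_of_lt_of_le ha.1 hu.1, lt_of_lt_of_le hu.2 htT⟩)
        t ⟨hat, le_rfl⟩
      rw [Real.norm_eq_abs, abs_of_nonneg (hEnn t), gronwallBound_ε0] at h
      refine h.trans ?_
      have hexp : Real.exp (4 * L * (t - a)) ≤ Real.exp (4 * L * t) :=
        Real.exp_le_exp.2 (by nlinarith [ha.1])
      exact mul_le_mul_of_nonneg_left hexp (hEnn a)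
    have hne : (nhdsWithin (0:ℝ) (Set.Ioo (0:ℝ) t)).NeBot := by
      rw [← mem_closure_iff_nhdsWithin_neBot, closure_Ioo h0.ne]
      exact ⟨le_rfl, h0.le⟩
    have htend : Tendsto (fun a => E a * Real.exp (4 * L * t))
        (nhdsWithin (0:ℝ) (Set.Ioo (0:ℝ) t)) (nhds (E 0 * Real.exp (4 * L * t))) := by
      have hE0 : ContinuousWithinAt E (Set.Icc 0 T) 0 := hEcont 0 ⟨le_rfl, hT⟩
      have hmono : nhdsWithin (0:ℝ) (Set.Ioo (0:ℝ) t) ≤ nhdsWithin 0 (Set.Icc 0 T) :=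
        nhdsWithin_mono 0 (fun u hu => ⟨hu.1.le, le_trans hu.2.le htT⟩)
      exact (hE0.tendsto.mono_left hmono).mul_const _
    have hfin := ge_of_tendsto htend (eventually_mem_nhdsWithin.mono (fun a ha => key a ha))
    rw [mul_comm]
    exact hfin
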